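/- Let ω, ω̃, h, h̃, n > 0, let K : ℝ⁶ → ℝ be K(u,v,w,ũ,ṽ,w̃) = (1/(32n))(4ωω̃(vṽ − ww̃) − ω²u² − ω̃²ũ²), and let X : ℝ⁶ → ℝ⁶ be the reduced Hamiltonian vector field X(x) = (2 a × ∇_a K(x), 2 b × ∇_b K(x)) with a = (u,v,w), b = (ũ,ṽ,w̃). Let x₀ = (h, 0, 0, −h̃, 0, 0) or x₀ = (−h, 0, 0, h̃, 0, 0). Then x₀ is a Lyapunov stable equilibrium of the flow of X on the product of spheres S = {x ∈ ℝ⁶ : u² + v² + w² = h², ũ² + ṽ² + w̃² = h̃²}: for every ε > 0 there exists δ > 0 such that every differentiable curve f : [0,∞) → ℝ⁶ with f′(t) = X(f(t)) for all t ≥ 0, f(0) ∈ S and ‖f(0) − x₀‖ < δ satisfies ‖f(t) − x₀‖ < ε for all t ≥ 0. In other words, a superposition of two travelling waves with wave numbers j and n/2 − j moving in opposite directions is stable. -/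

import Mathlib

/-!
STATEMENT 17: The relative equilibria `(h,0,0,−h̃,0,0)` and `(−h,0,0,h̃,0,0)`
(superpositions of two travelling waves moving in opposite directions) are
Lyapunov stable equilibria of the reduced flow of the quartic integral `K` on
the product of spheres `S = S²_h × S²_h̃`.
-/

noncomputable section

/-- `ℝ⁶` as a pair of vectors `a = (u,v,w)` and `b = (ũ,ṽ,w̃)` in `ℝ³`. -/
abbrev R6 : Type := (Fin 3 → ℝ) × (Fin 3 → ℝ)

/-- The quartic integral `K = (1/(32n))(4ωω̃(vṽ − ww̃) − ω²u² − ω̃²ũ²)`. -/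
noncomputable def Kred (ω ωt nn : ℝ) (x : R6) : ℝ :=
  (1/(32*nn)) * (4*ω*ωt*(x.1 1 * x.2 1 - x.1 2 * x.2 2)
    - ω^2 * (x.1 0)^2 - ωt^2 * (x.2 0)^2)

/-- The gradient of `K` with respect to the first factor `(u, v, w)`. -/
noncomputable def gradA (K : R6 → ℝ) (x : R6) : Fin 3 → ℝ :=
  fun i => fderiv ℝ K x (Pi.single i 1, 0)

/-- The gradient of `K` with respect to the second factor `(ũ, ṽ, w̃)`. -/
noncomputable def gradB (K : R6 → ℝ) (x : R6) : Fin 3 → ℝ :=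
  fun i => fderiv ℝ K x (0, Pi.single i 1)

/-- The reduced Hamiltonian vector field `X(x) = (2 a × ∇ₐK(x), 2 b × ∇_bK(x))`. -/
noncomputable def Xred (ω ωt nn : ℝ) (x : R6) : R6 :=
  ((2:ℝ) • crossProduct x.1 (gradA (Kred ω ωt nn) x),
   (2:ℝ) • crossProduct x.2 (gradB (Kred ω ωt nn) x))

/-- The product of spheres `S²_h × S²_h̃ ⊂ ℝ⁶`. -/
def prodSpheres (h ht : ℝ) : Set R6 :=
  {x : R6 | (x.1 0)^2 + (x.1 1)^2 + (x.1 2)^2 = h^2 ∧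
            (x.2 0)^2 + (x.2 1)^2 + (x.2 2)^2 = ht^2}

/-! ### Auxiliary material -/

noncomputable def pA (i : Fin 3) : R6 →L[ℝ] ℝ :=
  (ContinuousLinearMap.proj i).comp (ContinuousLinearMap.fst ℝ (Fin 3 → ℝ) (Fin 3 → ℝ))
noncomputable def pB (i : Fin 3) : R6 →L[ℝ] ℝ :=
  (ContinuousLinearMap.proj i).comp (ContinuousLinearMap.snd ℝ (Fin 3 → ℝ) (Fin 3 → ℝ))

lemma hA (i : Fin 3) (x : R6) : HasFDerivAt (fun y : R6 => y.1 i) (pA i) x := (pA i).hasFDerivAt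
lemma hB (i : Fin 3) (x : R6) : HasFDerivAt (fun y : R6 => y.2 i) (pB i) x := (pB i).hasFDerivAt

lemma hasFDerivAt_Kred (ω ωt nn : ℝ) (x : R6) :
    HasFDerivAt (Kred ω ωt nn)
      ((1/(32*nn)) • (((4*ω*ωt) • ((x.1 1 • pB 1 + x.2 1 • pA 1) - (x.1 2 • pB 2 + x.2 2 • pA 2)))
        - (ω^2 • (x.1 0 • pA 0 + x.1 0 • pA 0)) - (ωt^2 • (x.2 0 • pB 0 + x.2 0 • pB 0)))) x := by
  have hKeq : Kred ω ωt nn = fun x : R6 =>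
      (1/(32*nn)) * (4*ω*ωt*(x.1 1 * x.2 1 - x.1 2 * x.2 2)
        - ω^2 * (x.1 0 * x.1 0) - ωt^2 * (x.2 0 * x.2 0)) := by
    funext x; simp only [Kred]; ring
  rw [hKeq]
  have h1 := ((hA 1 x).mul (hB 1 x)).sub ((hA 2 x).mul (hB 2 x))
  have h2 := (h1.const_mul (4*ω*ωt)).sub (((hA 0 x).mul (hA 0 x)).const_mul (ω^2))
  have h3 := h2.sub (((hB 0 x).mul (hB 0 x)).const_mul (ωt^2))
  exact h3.const_mul (1/(32*nn))

lemma gradA_Kred (ω ωt nn : ℝ) (x : R6) :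
    gradA (Kred ω ωt nn) x =
      ![(1/(32*nn)) * (-(2*ω^2*x.1 0)), (1/(32*nn)) * (4*ω*ωt*x.2 1),
        (1/(32*nn)) * (-(4*ω*ωt*x.2 2))] := by
  funext i
  have h := (hasFDerivAt_Kred ω ωt nn x).fderiv
  simp only [gradA, h]
  fin_cases i <;>
    simp [pA, pB, ContinuousLinearMap.proj_apply, Pi.single, Function.update] <;>
    ring

lemma gradB_Kred (ω ωt nn : ℝ) (x : R6) :
    gradB (Kred ω ωt nn) x =
      ![(1/(32*nn)) * (-(2*ωt^2*x.2 0)), (1/(32*nn)) * (4*ω*ωt*x.1 1),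
        (1/(32*nn)) * (-(4*ω*ωt*x.1 2))] := by
  funext i
  have h := (hasFDerivAt_Kred ω ωt nn x).fderiv
  simp only [gradB, h]
  fin_cases i <;>
    simp [pA, pB, ContinuousLinearMap.proj_apply, Pi.single, Function.update] <;>
    ring

lemma Xred_eq (ω ωt nn : ℝ) (x : R6) :
    Xred ω ωt nn x =
      (![2*(x.1 1 * ((1/(32*nn)) * (-(4*ω*ωt*x.2 2))) - x.1 2 * ((1/(32*nn)) * (4*ω*ωt*x.2 1))),
         2*(x.1 2 * ((1/(32*nn)) * (-(2*ω^2*x.1 0))) - x.1 0 * ((1/(32*nn)) * (-(4*ω*ωt*x.2 2)))),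
         2*(x.1 0 * ((1/(32*nn)) * (4*ω*ωt*x.2 1)) - x.1 1 * ((1/(32*nn)) * (-(2*ω^2*x.1 0))))],
       ![2*(x.2 1 * ((1/(32*nn)) * (-(4*ω*ωt*x.1 2))) - x.2 2 * ((1/(32*nn)) * (4*ω*ωt*x.1 1))),
         2*(x.2 2 * ((1/(32*nn)) * (-(2*ωt^2*x.2 0))) - x.2 0 * ((1/(32*nn)) * (-(4*ω*ωt*x.1 2)))),
         2*(x.2 0 * ((1/(32*nn)) * (4*ω*ωt*x.1 1)) - x.2 1 * ((1/(32*nn)) * (-(2*ωt^2*x.2 0))))]) := by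
  unfold Xred
  rw [gradA_Kred, gradB_Kred, cross_apply, cross_apply]
  refine Prod.ext ?_ ?_ <;> funext i <;> fin_cases i <;> simp

/-- Constancy of a scalar function with vanishing right derivative on `[0,∞)`. -/
lemma constOn (g : ℝ → ℝ)
    (hg : ∀ t ∈ Set.Ici (0:ℝ), HasDerivWithinAt g 0 (Set.Ici 0) t) :
    ∀ t ∈ Set.Ici (0:ℝ), g t = g 0 := by
  intro t ht
  have hcont : ContinuousOn g (Set.Icc 0 t) := fun s hs =>
    ((hg s hs.1).continuousWithinAt).mono (fun y hy => hy.1)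
  have hder : ∀ s ∈ Set.Ico (0:ℝ) t, HasDerivWithinAt g 0 (Set.Ici s) s := fun s hs =>
    (hg s hs.1).mono (Set.Ici_subset_Ici.2 hs.1)
  exact constant_of_has_deriv_right_zero hcont hder t ⟨ht, le_rfl⟩

/-- Conserved quantities of the reduced flow: `u − ũ` and both sphere radii. -/
lemma conserved (ω ωt nn : ℝ) (f : ℝ → R6)
    (hf : ∀ t ∈ Set.Ici (0:ℝ), HasDerivWithinAt f (Xred ω ωt nn (f t)) (Set.Ici 0) t) :
    ∀ t ∈ Set.Ici (0:ℝ),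
      ((f t).1 0 - (f t).2 0 = (f 0).1 0 - (f 0).2 0) ∧
      ((f t).1 0^2 + (f t).1 1^2 + (f t).1 2^2 = (f 0).1 0^2 + (f 0).1 1^2 + (f 0).1 2^2) ∧
      ((f t).2 0^2 + (f t).2 1^2 + (f t).2 2^2 = (f 0).2 0^2 + (f 0).2 1^2 + (f 0).2 2^2) := by
  have dA : ∀ (i : Fin 3), ∀ t ∈ Set.Ici (0:ℝ),
      HasDerivWithinAt (fun s => (f s).1 i) ((Xred ω ωt nn (f t)).1 i) (Set.Ici 0) t :=
    fun i t ht => (hA i (f t)).comp_hasDerivWithinAt t (hf t ht)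
  have dB : ∀ (i : Fin 3), ∀ t ∈ Set.Ici (0:ℝ),
      HasDerivWithinAt (fun s => (f s).2 i) ((Xred ω ωt nn (f t)).2 i) (Set.Ici 0) t :=
    fun i t ht => (hB i (f t)).comp_hasDerivWithinAt t (hf t ht)
  have hG := constOn (fun s => (f s).1 0 - (f s).2 0) (by
    intro t ht
    have key := (dA 0 t ht).sub (dB 0 t ht)
    convert key using 1
    · rfl
    · rfl
    · rfl
    rw [Xred_eq]; simp; ring)
  have hRA := constOn (fun s => (f s).1 0^2 + (f s).1 1^2 + (f s).1 2^2) (by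
    intro t ht
    have key := (((dA 0 t ht).pow 2).add ((dA 1 t ht).pow 2)).add ((dA 2 t ht).pow 2)
    convert key using 1
    · rfl
    · rfl
    · rfl
    rw [Xred_eq]; simp; ring)
  have hRB := constOn (fun s => (f s).2 0^2 + (f s).2 1^2 + (f s).2 2^2) (by
    intro t ht
    have key := (((dB 0 t ht).pow 2).add ((dB 1 t ht).pow 2)).add ((dB 2 t ht).pow 2)
    convert key using 1
    · rfl
    · rfl
    · rfl
    rw [Xred_eq]; simp; ring)
  exact fun t ht => ⟨hG t ht, hRA t ht, hRB t ht⟩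

lemma isCompact_prodSpheres (h ht : ℝ) (hh : 0 < h) (hht : 0 < ht) :
    IsCompact (prodSpheres h ht) := by
  have c1 : ∀ i : Fin 3, Continuous fun x : R6 => x.1 i :=
    fun i => (continuous_apply i).comp continuous_fst
  have c2 : ∀ i : Fin 3, Continuous fun x : R6 => x.2 i :=
    fun i => (continuous_apply i).comp continuous_snd
  have hclosed : IsClosed (prodSpheres h ht) := by
    have : prodSpheres h ht =
        {x : R6 | (x.1 0)^2 + (x.1 1)^2 + (x.1 2)^2 = h^2} ∩
        {x : R6 | (x.2 0)^2 + (x.2 1)^2 + (x.2 2)^2 = ht^2} := rfl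
    rw [this]
    exact (isClosed_eq (by fun_prop) continuous_const).inter
      (isClosed_eq (by fun_prop) continuous_const)
  have hbdd : Bornology.IsBounded (prodSpheres h ht) := by
    apply (Metric.isBounded_closedBall (x := (0:R6)) (r := h + ht)).subset
    intro x hx
    rcases hx with ⟨h1, h2⟩
    have hb1 : ∀ i : Fin 3, (x.1 i)^2 ≤ h^2 := by
      have g0 : (x.1 0)^2 ≤ h^2 := by nlinarith [sq_nonneg (x.1 1), sq_nonneg (x.1 2)]
      have g1 : (x.1 1)^2 ≤ h^2 := by nlinarith [sq_nonneg (x.1 0), sq_nonneg (x.1 2)]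
      have g2 : (x.1 2)^2 ≤ h^2 := by nlinarith [sq_nonneg (x.1 0), sq_nonneg (x.1 1)]
      intro i; fin_cases i; exacts [g0, g1, g2]
    have hb2 : ∀ i : Fin 3, (x.2 i)^2 ≤ ht^2 := by
      have g0 : (x.2 0)^2 ≤ ht^2 := by nlinarith [sq_nonneg (x.2 1), sq_nonneg (x.2 2)]
      have g1 : (x.2 1)^2 ≤ ht^2 := by nlinarith [sq_nonneg (x.2 0), sq_nonneg (x.2 2)]
      have g2 : (x.2 2)^2 ≤ ht^2 := by nlinarith [sq_nonneg (x.2 0), sq_nonneg (x.2 1)]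
      intro i; fin_cases i; exacts [g0, g1, g2]
    simp only [Metric.mem_closedBall, dist_zero_right]
    rw [Prod.norm_def]
    have hhht : (0:ℝ) ≤ h + ht := by linarith
    refine max_le ?_ ?_ <;> rw [pi_norm_le_iff_of_nonneg hhht] <;> intro i <;>
      rw [Real.norm_eq_abs, abs_le] <;> constructor
    · nlinarith [hb1 i]
    · nlinarith [hb1 i]
    · nlinarith [hb2 i]
    · nlinarith [hb2 i]
  exact Metric.isCompact_of_isClosed_isBounded hclosed hbdd


set_option maxHeartbeats 1000000 in
/-- **Corollary 3 of the paper (first part).** A superposition of two travelling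
waves with wave numbers `j` and `n/2 − j` moving in opposite directions, i.e.
the relative equilibrium `(h,0,0,−h̃,0,0)` or `(−h,0,0,h̃,0,0)`, is a Lyapunov
stable equilibrium of the reduced flow on the product of spheres. -/
theorem opposite_travelling_waves_stable
    (ω ωt h ht nn : ℝ) (hω : 0 < ω) (hωt : 0 < ωt)
    (hh : 0 < h) (hht : 0 < ht) (hn : 0 < nn)
    (x₀ : R6)
    (hx₀ : x₀ = (![h, 0, 0], ![-ht, 0, 0]) ∨ x₀ = (![-h, 0, 0], ![ht, 0, 0])) :
    ∀ ε > 0, ∃ δ > 0, ∀ f : ℝ → R6,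
      (∀ t ∈ Set.Ici (0:ℝ), HasDerivWithinAt f (Xred ω ωt nn (f t)) (Set.Ici 0) t) →
      f 0 ∈ prodSpheres h ht → ‖f 0 - x₀‖ < δ →
      ∀ t ∈ Set.Ici (0:ℝ), ‖f t - x₀‖ < ε := by
  intro ε hε
  -- extract a sign σ describing x₀ coordinatewise
  obtain ⟨σ, hσ2, e10, e11, e12, e20, e21, e22⟩ :
      ∃ σ : ℝ, σ^2 = 1 ∧ x₀.1 0 = σ*h ∧ x₀.1 1 = 0 ∧ x₀.1 2 = 0 ∧
        x₀.2 0 = -(σ*ht) ∧ x₀.2 1 = 0 ∧ x₀.2 2 = 0 := by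
    rcases hx₀ with h1 | h1 <;> subst h1
    · exact ⟨1, by norm_num, by norm_num, rfl, rfl, by norm_num, rfl, rfl⟩
    · exact ⟨-1, by norm_num, by norm_num, rfl, rfl, by norm_num, rfl, rfl⟩
  -- the Lyapunov function
  set V : R6 → ℝ := fun x => h + ht - σ * (x.1 0 - x.2 0) with hVdef
  have c1 : Continuous fun x : R6 => x.1 0 := (continuous_apply _).comp continuous_fst
  have c2 : Continuous fun x : R6 => x.2 0 := (continuous_apply _).comp continuous_snd
  have hVc : Continuous V := continuous_const.sub (continuous_const.mul (c1.sub c2))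
  have hVx₀ : V x₀ = 0 := by
    simp only [hVdef, e10, e20]
    linear_combination (-(h+ht)) * hσ2
  have bnd1 : ∀ x ∈ prodSpheres h ht, σ * x.1 0 ≤ h := by
    rintro x ⟨h1, h2⟩
    have hs : (σ * x.1 0)^2 = (x.1 0)^2 := by linear_combination (x.1 0)^2 * hσ2
    nlinarith [sq_nonneg (σ * x.1 0 - h), hs, sq_nonneg (x.1 1), sq_nonneg (x.1 2), hh]
  have bnd2 : ∀ x ∈ prodSpheres h ht, -(σ * x.2 0) ≤ ht := by
    rintro x ⟨h1, h2⟩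
    have hs : (σ * x.2 0)^2 = (x.2 0)^2 := by linear_combination (x.2 0)^2 * hσ2
    nlinarith [sq_nonneg (σ * x.2 0 + ht), hs, sq_nonneg (x.2 1), sq_nonneg (x.2 2), hht]
  have hVnonneg : ∀ x ∈ prodSpheres h ht, 0 ≤ V x := by
    intro x hx
    have b1 := bnd1 x hx
    have b2 := bnd2 x hx
    have hexp : V x = (h - σ * x.1 0) + (ht + σ * x.2 0) := by simp only [hVdef]; ring
    rw [hexp]; linarith
  have hVzero : ∀ x ∈ prodSpheres h ht, V x = 0 → x = x₀ := by
    intro x hx hV0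
    obtain ⟨h1, h2⟩ := hx
    have b1 := bnd1 x ⟨h1, h2⟩
    have b2 := bnd2 x ⟨h1, h2⟩
    have hV0' : σ * x.1 0 - σ * x.2 0 = h + ht := by
      simp only [hVdef] at hV0; linear_combination -hV0
    have hb1 : σ * x.1 0 = h := by linarith
    have hb2 : σ * x.2 0 = -ht := by linarith
    have hx10 : x.1 0 = σ * h := by linear_combination σ * hb1 - x.1 0 * hσ2
    have hx20 : x.2 0 = -(σ * ht) := by linear_combination σ * hb2 - x.2 0 * hσ2
    have hsq1 : (x.1 0)^2 = h^2 := by rw [hx10]; linear_combination h^2 * hσ2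
    have hsq2 : (x.2 0)^2 = ht^2 := by rw [hx20]; linear_combination ht^2 * hσ2
    have h11sq : (x.1 1)^2 = 0 :=
      le_antisymm (by nlinarith [sq_nonneg (x.1 2)]) (sq_nonneg _)
    have h12sq : (x.1 2)^2 = 0 :=
      le_antisymm (by nlinarith [sq_nonneg (x.1 1)]) (sq_nonneg _)
    have h21sq : (x.2 1)^2 = 0 :=
      le_antisymm (by nlinarith [sq_nonneg (x.2 2)]) (sq_nonneg _)
    have h22sq : (x.2 2)^2 = 0 :=
      le_antisymm (by nlinarith [sq_nonneg (x.2 1)]) (sq_nonneg _)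
    have h11 : x.1 1 = 0 := by
      have := pow_eq_zero_iff (n := 2) (by norm_num) |>.1 h11sq; exact this
    have h12 : x.1 2 = 0 := by
      have := pow_eq_zero_iff (n := 2) (by norm_num) |>.1 h12sq; exact this
    have h21 : x.2 1 = 0 := by
      have := pow_eq_zero_iff (n := 2) (by norm_num) |>.1 h21sq; exact this
    have h22 : x.2 2 = 0 := by
      have := pow_eq_zero_iff (n := 2) (by norm_num) |>.1 h22sq; exact this
    have g10 : x.1 0 = x₀.1 0 := by rw [hx10, e10]
    have g11 : x.1 1 = x₀.1 1 := by rw [h11, e11]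
    have g12 : x.1 2 = x₀.1 2 := by rw [h12, e12]
    have g20 : x.2 0 = x₀.2 0 := by rw [hx20, e20]
    have g21 : x.2 1 = x₀.2 1 := by rw [h21, e21]
    have g22 : x.2 2 = x₀.2 2 := by rw [h22, e22]
    refine Prod.ext (funext fun i => ?_) (funext fun i => ?_) <;> fin_cases i
    exacts [g10, g11, g12, g20, g21, g22]
  -- the bad set
  set C : Set R6 := prodSpheres h ht ∩ {x : R6 | ε ≤ ‖x - x₀‖} with hCdef
  have hCcompact : IsCompact C :=
    (isCompact_prodSpheres h ht hh hht).inter_right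
      (isClosed_le continuous_const (by fun_prop))
  rcases C.eq_empty_or_nonempty with hCe | hCne
  · -- the whole sphere is within ε of x₀
    refine ⟨1, one_pos, fun f hf hf0 _ t htt => ?_⟩
    obtain ⟨-, hr1, hr2⟩ := conserved ω ωt nn f hf t htt
    have hfS : f t ∈ prodSpheres h ht := ⟨hr1.trans hf0.1, hr2.trans hf0.2⟩
    by_contra hcon
    have : f t ∈ C := ⟨hfS, le_of_not_gt hcon⟩
    rw [hCe] at this; exact this
  · -- minimum of V on C is positive
    obtain ⟨z, hzC, hzmin⟩ := hCcompact.exists_isMinOn hCne hVc.continuousOn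
    have hm : 0 < V z := by
      rcases lt_or_eq_of_le (hVnonneg z hzC.1) with hlt | heq
      · exact hlt
      · exfalso
        have hz : z = x₀ := hVzero z hzC.1 heq.symm
        have := hzC.2
        rw [hz] at this
        simp only [Set.mem_setOf_eq, sub_self, norm_zero] at this
        linarith
    -- choose δ by continuity of V at x₀
    obtain ⟨δ, hδpos, hδ⟩ := Metric.continuousAt_iff.1 hVc.continuousAt (V z) hm
    refine ⟨δ, hδpos, fun f hf hf0 hnear t htt => ?_⟩
    obtain ⟨hG, hr1, hr2⟩ := conserved ω ωt nn f hf t htt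
    have hfS : f t ∈ prodSpheres h ht := ⟨hr1.trans hf0.1, hr2.trans hf0.2⟩
    have hVf0 : V (f 0) < V z := by
      have : dist (f 0) x₀ < δ := by rw [dist_eq_norm]; exact hnear
      have := hδ this
      rw [hVx₀, Real.dist_eq] at this
      have := abs_lt.1 this
      linarith [this.2, hVnonneg (f 0) hf0]
    have hVft : V (f t) = V (f 0) := by simp only [hVdef, hG]
    by_contra hcon
    have hmem : f t ∈ C := ⟨hfS, le_of_not_gt hcon⟩
    have := hzmin hmem
    simp only [Set.mem_setOf_eq] at this
    rw [hVft] at this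
    linarith [hVf0, this]
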